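/- (Doubling step on Weierstrass curves with a4 = −3.) Let (X1, Y1, Z1) with Z1 ≠ 0 and Y1 ≠ 0 represent the affine point (x1, y1) = (X1/Z1², Y1/Z1³) on E: y² = x³ − 3·x + a6. Define T1 = Z1², A = Y1², B = X1·A, C = 3·(X1 − T1)·(X1 + T1), X3 = C² − 8·B, Z3 = (Y1 + Z1)² − A − T1, Y3 = C·(4·B − X3) − 8·A². Then Z3 = 2·Y1·Z1 ≠ 0, λ = C/Z3 where λ = (3·x1² − 3)/(2·y1), (X3/Z3², Y3/Z3³) = (λ² − 2·x1, λ·(x1 − X3/Z3²) − y1) is the double of (x1, y1), and for all x, y ∈ K the line value l = (Z3·T1)·y − 2·A − C·T1·x + X1·C satisfies l = 2·Y1·Z1³·(y − y1 − λ·(x − x1)); i.e. l is a nonzero K-multiple of the tangent line to E at (x1, y1) evaluated at (x, y). -/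

import Mathlib

/-- Doubling step in Jacobian coordinates on a Weierstrass curve with a₄ = −3:
the explicit formulas compute the tangent double and the line value l is the
evaluation of the tangent line scaled by 2·Y₁·Z₁³. -/
theorem jacobian_doubling_a4_minus3_correct
    (K : Type*) [Field K] (hchar : (2 : K) ≠ 0)
    (a6 : K)
    (X1 Y1 Z1 : K) (hZ1 : Z1 ≠ 0) (hY1 : Y1 ≠ 0)
    (x1 y1 : K)
    (hx1 : x1 = X1 / Z1 ^ 2) (hy1 : y1 = Y1 / Z1 ^ 3)
    (h1 : y1 ^ 2 = x1 ^ 3 - 3 * x1 + a6)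
    (T1 A B C X3 Z3 Y3 : K)
    (hT1 : T1 = Z1 ^ 2) (hA : A = Y1 ^ 2) (hB : B = X1 * A)
    (hC : C = 3 * (X1 - T1) * (X1 + T1))
    (hX3 : X3 = C ^ 2 - 8 * B)
    (hZ3 : Z3 = (Y1 + Z1) ^ 2 - A - T1)
    (hY3 : Y3 = C * (4 * B - X3) - 8 * A ^ 2)
    (lam : K) (hlam : lam = (3 * x1 ^ 2 - 3) / (2 * y1)) :
    Z3 = 2 * Y1 * Z1 ∧ Z3 ≠ 0 ∧ C / Z3 = lam ∧
    X3 / Z3 ^ 2 = lam ^ 2 - 2 * x1 ∧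
    Y3 / Z3 ^ 3 = lam * (x1 - X3 / Z3 ^ 2) - y1 ∧
    ∀ x y : K, (Z3 * T1) * y - 2 * A - C * T1 * x + X1 * C
      = 2 * Y1 * Z1 ^ 3 * (y - y1 - lam * (x - x1)) := by
  subst hT1 hA hB hC hX3 hZ3 hY3 hx1 hy1
  have hZ3eq : (Y1 + Z1) ^ 2 - Y1 ^ 2 - Z1 ^ 2 = 2 * Y1 * Z1 := by ring
  have hZ3ne : 2 * Y1 * Z1 ≠ 0 := mul_ne_zero (mul_ne_zero hchar hY1) hZ1
  have h2y1 : 2 * (Y1 / Z1 ^ 3) ≠ 0 :=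
    mul_ne_zero hchar (div_ne_zero hY1 (pow_ne_zero _ hZ1))
  have h1' : Y1 ^ 2 = X1 ^ 3 - 3 * X1 * Z1 ^ 4 + a6 * Z1 ^ 6 := by
    have h8 : (Z1 ^ 8 : K) ≠ 0 := pow_ne_zero _ hZ1
    field_simp at h1
    apply mul_left_cancel₀ h8
    linear_combination Z1 ^ 8 * h1
  have hlam' : lam = 3 * (X1 - Z1 ^ 2) * (X1 + Z1 ^ 2) / (2 * Y1 * Z1) := by
    rw [hlam, div_eq_div_iff h2y1 hZ3ne]
    field_simp
    ring
  clear hlam h1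
  subst hlam'
  refine ⟨hZ3eq, hZ3eq ▸ hZ3ne, ?_, ?_, ?_, ?_⟩
  · rw [hZ3eq]
  · rw [hZ3eq]; field_simp; ring
  · rw [hZ3eq]
    rw [show X1 / Z1 ^ 2 = 4 * (X1 * Y1 ^ 2) / (2 * Y1 * Z1) ^ 2 from by
      rw [div_eq_div_iff (pow_ne_zero 2 hZ1) (pow_ne_zero 2 hZ3ne)]; ring]
    rw [show Y1 / Z1 ^ 3 = 8 * (Y1 ^ 2) ^ 2 / (2 * Y1 * Z1) ^ 3 from by
      rw [div_eq_div_iff (pow_ne_zero 3 hZ1) (pow_ne_zero 3 hZ3ne)]; ring]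
    rw [div_sub_div_same, div_mul_div_comm,
      show (2*Y1*Z1) * (2*Y1*Z1)^2 = (2*Y1*Z1)^3 from by ring, div_sub_div_same]
  · intro x y
    rw [hZ3eq]; field_simp; ring
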